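/- arXiv:1511.08658 — 4 statements merged into one kernel-verified Lean document; each statement's English description precedes it below -/
import Mathlib

section
/- Let Z : ℝ → ℂ be smooth with Z′(s) = e^{iφ(s)} for a smooth real-valued function φ, and set k = φ′ (the curvature). Then the Schwarzian derivative satisfies pointwise {Z, s}_SD := Z‴(s)/Z′(s) − (3/2)(Z″(s)/Z′(s))² = (1/2)k(s)² + i k′(s). Consequently, if Z is in addition 2π-periodic (a closed curve), then ∮ {Z, s}_SD ds = (1/2)∮ k(s)² ds, where ∮ denotes ∫₀^{2π}; i.e. the integral of the Schwarzian equals the Euler–Bernoulli energy functional E[Z] = (1/2)∮ k² ds. -/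
open Real intervalIntegral

/-- For a smooth unit-speed plane curve `Z : ℝ → ℂ` with
tangent angle `φ` (`Z' = e^{iφ}`) and curvature `k = φ'`, the Schwarzian
derivative satisfies pointwise
`{Z,s}_SD = Z'''/Z' - (3/2)(Z''/Z')² = (1/2)k² + i k'`;
consequently, if `Z` is `2π`-periodic then
`∮ {Z,s}_SD ds = (1/2) ∮ k² ds`, the Euler–Bernoulli energy. -/
theorem schwarzian_eq_half_curvature_sq_add_I_deriv
    (Z : ℝ → ℂ) (φ : ℝ → ℝ) (k : ℝ → ℝ)
    (hZ : ContDiff ℝ (⊤:ℕ∞) Z) (hφ : ContDiff ℝ (⊤:ℕ∞) φ)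
    (htan : ∀ s, deriv Z s = Complex.exp (Complex.I * φ s))
    (hk : k = deriv φ) :
    (∀ s, iteratedDeriv 3 Z s / deriv Z s
        - (3/2) * (iteratedDeriv 2 Z s / deriv Z s) ^ 2
        = (1/2) * (Complex.ofReal (k s)) ^ 2 + Complex.I * Complex.ofReal (deriv k s)) ∧
    (Function.Periodic Z (2 * π) →
      (∫ s in (0:ℝ)..(2 * π),
          (iteratedDeriv 3 Z s / deriv Z s
            - (3/2) * (iteratedDeriv 2 Z s / deriv Z s) ^ 2))
        = Complex.ofReal ((1/2) * ∫ s in (0:ℝ)..(2 * π), (k s) ^ 2)) := by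
  subst hk
  have hφd : Differentiable ℝ φ := hφ.differentiable (by simp)
  have hφ' : ContDiff ℝ (⊤:ℕ∞) (deriv φ) := (contDiff_infty_iff_deriv.mp hφ).2
  have hφ'd : Differentiable ℝ (deriv φ) := hφ'.differentiable (by simp)
  -- derivative of t ↦ exp (I φ t)
  have hE : ∀ s, HasDerivAt (fun t => Complex.exp (Complex.I * φ t))
      (Complex.I * deriv φ s * Complex.exp (Complex.I * φ s)) s := by
    intro s
    have h1 : HasDerivAt (fun t : ℝ => Complex.I * (φ t : ℂ)) (Complex.I * deriv φ s) s :=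
      ((hφd s).hasDerivAt.ofReal_comp).const_mul Complex.I
    have := h1.cexp
    convert this using 1
    ring
  have hZ' : deriv Z = fun t => Complex.exp (Complex.I * φ t) := funext htan
  have hd2 : ∀ s, iteratedDeriv 2 Z s
      = Complex.I * deriv φ s * Complex.exp (Complex.I * φ s) := by
    intro s
    have : iteratedDeriv 2 Z = deriv (deriv Z) := by
      rw [iteratedDeriv_succ, iteratedDeriv_one]
    rw [this, hZ']
    exact (hE s).deriv
  have hd2' : ∀ s, HasDerivAt (fun t => Complex.I * deriv φ t * Complex.exp (Complex.I * φ t))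
      (Complex.I * deriv (deriv φ) s * Complex.exp (Complex.I * φ s)
        + (Complex.I * deriv φ s) * (Complex.I * deriv φ s * Complex.exp (Complex.I * φ s))) s := by
    intro s
    exact (((hφ'd s).hasDerivAt.ofReal_comp).const_mul Complex.I).mul (hE s)
  have hd3 : ∀ s, iteratedDeriv 3 Z s
      = Complex.I * deriv (deriv φ) s * Complex.exp (Complex.I * φ s)
        + (Complex.I * deriv φ s) * (Complex.I * deriv φ s * Complex.exp (Complex.I * φ s)) := by
    intro s
    have h3 : iteratedDeriv 3 Z = deriv (iteratedDeriv 2 Z) := iteratedDeriv_succ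
    rw [h3, funext hd2]
    exact (hd2' s).deriv
  have hpoint : ∀ s, iteratedDeriv 3 Z s / deriv Z s
        - (3/2) * (iteratedDeriv 2 Z s / deriv Z s) ^ 2
        = (1/2) * (Complex.ofReal (deriv φ s)) ^ 2
          + Complex.I * Complex.ofReal (deriv (deriv φ) s) := by
    intro s
    rw [hd3 s, hd2 s, htan s]
    have hne : Complex.exp (Complex.I * φ s) ≠ 0 := Complex.exp_ne_zero _
    field_simp
    ring_nf
    rw [Complex.I_sq]
    ring
  refine ⟨hpoint, ?_⟩
  intro hper
  -- periodicity of deriv φ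
  have hZper : ∀ s, deriv Z (s + 2 * π) = deriv Z s := by
    intro s
    have hshift : (fun t : ℝ => Z (t + 2 * π)) = Z := funext fun t => hper t
    calc deriv Z (s + 2 * π) = deriv (fun t : ℝ => Z (t + 2 * π)) s :=
          (deriv_comp_add_const Z (2 * π) s).symm
      _ = deriv Z s := by rw [hshift]
  have hφper : deriv φ (0 + 2 * π) = deriv φ 0 := by
    have heq : (fun t : ℝ => Complex.exp (Complex.I * φ (t + 2 * π)))
        = fun t => Complex.exp (Complex.I * φ t) := by
      funext t
      rw [← htan, ← htan, hZper]
    have h1 : deriv (fun t : ℝ => Complex.exp (Complex.I * φ (t + 2 * π))) 0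
        = Complex.I * deriv φ (0 + 2 * π) * Complex.exp (Complex.I * φ (0 + 2 * π)) := by
      rw [deriv_comp_add_const (fun t : ℝ => Complex.exp (Complex.I * φ t)) (2 * π) 0]
      exact (hE (0 + 2 * π)).deriv
    rw [heq, (hE 0).deriv] at h1
    have hE0 : Complex.exp (Complex.I * (φ ((0:ℝ) + 2 * π) : ℂ))
        = Complex.exp (Complex.I * (φ 0 : ℂ)) := by
      rw [← htan, ← htan, hZper]
    rw [hE0] at h1
    have hne : Complex.exp (Complex.I * (φ 0 : ℂ)) ≠ 0 := Complex.exp_ne_zero _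
    have h4 : ((deriv φ (0 + 2 * π) : ℝ) : ℂ) = ((deriv φ 0 : ℝ) : ℂ) := by
      have h5 := mul_right_cancel₀ hne h1
      have h6 := mul_left_cancel₀ Complex.I_ne_zero h5
      exact h6.symm
    exact_mod_cast h4
  -- the integral
  have hkc : Continuous (deriv φ) := hφ'.continuous
  have hk'c : Continuous (deriv (deriv φ)) := (contDiff_infty_iff_deriv.mp hφ').2.continuous
  rw [intervalIntegral.integral_congr (g := fun s =>
      ((1/2 * (deriv φ s)^2 : ℝ) : ℂ) + Complex.I * ((deriv (deriv φ) s : ℝ) : ℂ))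
      (fun s _ => by rw [hpoint s]; push_cast; ring)]
  have hInt1 : IntervalIntegrable (fun s : ℝ => ((1/2 * (deriv φ s)^2 : ℝ) : ℂ))
      MeasureTheory.volume 0 (2 * π) := by
    apply Continuous.intervalIntegrable
    fun_prop
  have hInt2 : IntervalIntegrable (fun s : ℝ => Complex.I * ((deriv (deriv φ) s : ℝ) : ℂ))
      MeasureTheory.volume 0 (2 * π) := by
    apply Continuous.intervalIntegrable
    fun_prop
  rw [intervalIntegral.integral_add hInt1 hInt2]
  have hI1 : (∫ s in (0:ℝ)..(2*π), ((1/2 * (deriv φ s)^2 : ℝ) : ℂ))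
      = Complex.ofReal (∫ s in (0:ℝ)..(2*π), 1/2 * (deriv φ s)^2) :=
    intervalIntegral.integral_ofReal
  have hI2 : (∫ s in (0:ℝ)..(2*π), Complex.I * ((deriv (deriv φ) s : ℝ) : ℂ)) = 0 := by
    rw [intervalIntegral.integral_const_mul, intervalIntegral.integral_ofReal,
      intervalIntegral.integral_deriv_eq_sub (fun x _ => hφ'd x)
        (hk'c.intervalIntegrable _ _)]
    rw [show (2*π : ℝ) = 0 + 2*π by ring, hφper]
    simp
  rw [hI1, hI2, add_zero, ← intervalIntegral.integral_const_mul]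
end

section
/- Let Z : ℝ × ℝ → ℂ be a smooth family with |∂_s Z| ≡ 1, tangent angle φ (∂_s Z = e^{iφ}), curvature k = ∂_s φ, and ∂_t Z = (vʳ + i vⁱ)∂_s Z with vʳ, vⁱ smooth real-valued. Assume moreover that k(s,t) ≠ 0 for all (s,t). Then the curvature evolves by ∂_t k = ∂_s( ∂_s( (1/k)·∂_s vʳ ) + k·vʳ ), i.e. ∂_t k = Ω_I vʳ where Ω_I = ∂_s(∂_s (1/k) ∂_s + k). -/
open Real

/-- Partial derivative in the first (arclength) variable, `ℂ`-valued. -/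
noncomputable def dS (f : ℝ → ℝ → ℂ) (s t : ℝ) : ℂ := deriv (fun σ => f σ t) s

/-- Partial derivative in the second (time) variable, `ℂ`-valued. -/
noncomputable def dT (f : ℝ → ℝ → ℂ) (s t : ℝ) : ℂ := deriv (fun τ => f s τ) t

/-- Partial derivative in the first (arclength) variable, `ℝ`-valued. -/
noncomputable def dSr (f : ℝ → ℝ → ℝ) (s t : ℝ) : ℝ := deriv (fun σ => f σ t) s

/-- Partial derivative in the second (time) variable, `ℝ`-valued. -/
noncomputable def dTr (f : ℝ → ℝ → ℝ) (s t : ℝ) : ℝ := deriv (fun τ => f s τ) t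

section helpers
variable {E : Type*} [NormedAddCommGroup E] [NormedSpace ℝ E]

lemma hasDerivAt_slice1 (F : ℝ × ℝ → E) (hF : ContDiff ℝ (⊤:ℕ∞) F) (s t : ℝ) :
    HasDerivAt (fun σ => F (σ, t)) (fderiv ℝ F (s, t) (1, 0)) s := by
  have h1 : HasDerivAt (fun σ : ℝ => (σ, t)) ((1:ℝ), (0:ℝ)) s :=
    (hasDerivAt_id s).prodMk (hasDerivAt_const s t)
  exact ((hF.differentiable (by simp) (s, t)).hasFDerivAt).comp_hasDerivAt s h1

lemma hasDerivAt_slice2 (F : ℝ × ℝ → E) (hF : ContDiff ℝ (⊤:ℕ∞) F) (s t : ℝ) :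
    HasDerivAt (fun τ => F (s, τ)) (fderiv ℝ F (s, t) (0, 1)) t := by
  have h1 : HasDerivAt (fun τ : ℝ => (s, τ)) ((0:ℝ), (1:ℝ)) t :=
    (hasDerivAt_const t s).prodMk (hasDerivAt_id t)
  exact ((hF.differentiable (by simp) (s, t)).hasFDerivAt).comp_hasDerivAt t h1

lemma smooth_pd (F : ℝ × ℝ → E) (hF : ContDiff ℝ (⊤:ℕ∞) F) (v : ℝ × ℝ) :
    ContDiff ℝ (⊤:ℕ∞) (fun p => fderiv ℝ F p v) := by
  have h1 : ContDiff ℝ (⊤:ℕ∞) (fderiv ℝ F) := hF.fderiv_right (by simp)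
  exact (ContinuousLinearMap.apply ℝ E v).contDiff.comp h1

lemma mixed_symm (F : ℝ × ℝ → E) (hF : ContDiff ℝ (⊤:ℕ∞) F) (s t : ℝ) :
    deriv (fun τ => deriv (fun σ => F (σ, τ)) s) t
      = deriv (fun σ => deriv (fun τ => F (σ, τ)) t) s := by
  have hsymm : IsSymmSndFDerivAt ℝ F (s, t) :=
    hF.contDiffAt.isSymmSndFDerivAt (by simp [minSmoothness_of_isRCLikeNormedField]; exact WithTop.coe_le_coe.mpr le_top)
  have hG1 : ContDiff ℝ (⊤:ℕ∞) (fun p => fderiv ℝ F p ((1:ℝ), (0:ℝ))) :=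
    smooth_pd F hF _
  have hG2 : ContDiff ℝ (⊤:ℕ∞) (fun p => fderiv ℝ F p ((0:ℝ), (1:ℝ))) :=
    smooth_pd F hF _
  have hfd : ContDiff ℝ (⊤:ℕ∞) (fderiv ℝ F) := hF.fderiv_right (by simp)
  -- value of the fderiv of the partial-derivative functions
  have key : ∀ (v w : ℝ × ℝ),
      fderiv ℝ (fun p => fderiv ℝ F p v) (s, t) w
        = fderiv ℝ (fderiv ℝ F) (s, t) w v := by
    intro v w
    have h : HasFDerivAt (fun p => fderiv ℝ F p v)
        ((ContinuousLinearMap.apply ℝ E v).comp (fderiv ℝ (fderiv ℝ F) (s, t))) (s, t) :=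
      ((ContinuousLinearMap.apply ℝ E v).hasFDerivAt).comp (s, t)
        ((hfd.differentiable (by simp) (s, t)).hasFDerivAt)
    rw [h.fderiv]; rfl
  calc deriv (fun τ => deriv (fun σ => F (σ, τ)) s) t
      = deriv (fun τ => fderiv ℝ F (s, τ) ((1:ℝ), (0:ℝ))) t := by
        congr 1; funext τ; exact (hasDerivAt_slice1 F hF s τ).deriv
    _ = fderiv ℝ (fun p => fderiv ℝ F p ((1:ℝ), (0:ℝ))) (s, t) ((0:ℝ), (1:ℝ)) :=
        (hasDerivAt_slice2 _ hG1 s t).deriv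
    _ = fderiv ℝ (fderiv ℝ F) (s, t) ((0:ℝ), (1:ℝ)) ((1:ℝ), (0:ℝ)) := key _ _
    _ = fderiv ℝ (fderiv ℝ F) (s, t) ((1:ℝ), (0:ℝ)) ((0:ℝ), (1:ℝ)) := hsymm _ _
    _ = fderiv ℝ (fun p => fderiv ℝ F p ((0:ℝ), (1:ℝ))) (s, t) ((1:ℝ), (0:ℝ)) := (key _ _).symm
    _ = deriv (fun σ => fderiv ℝ F (σ, t) ((0:ℝ), (1:ℝ))) s := ((hasDerivAt_slice1 _ hG2 s t).deriv).symm
    _ = deriv (fun σ => deriv (fun τ => F (σ, τ)) t) s := by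
        congr 1; funext σ; exact ((hasDerivAt_slice2 F hF σ t).deriv).symm

end helpers

/-- For an isometric deformation `Z(s,t)` of a plane curve
(`|∂ₛZ| ≡ 1`) with tangent angle `φ`, curvature `k = ∂ₛφ`, deformation
velocity `∂ₜZ = (vʳ + i vⁱ) ∂ₛZ`, and nowhere-vanishing curvature, the
curvature evolves by `∂ₜk = ∂ₛ(∂ₛ((1/k) ∂ₛvʳ) + k vʳ)`, i.e. `∂ₜk = Ω_I vʳ`
where `Ω_I = ∂ₛ(∂ₛ (1/k) ∂ₛ + k)`. -/
theorem isometric_deformation_OmegaI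
    (Z : ℝ → ℝ → ℂ) (φ vr vi k : ℝ → ℝ → ℝ)
    (hZ : ContDiff ℝ (⊤:ℕ∞) (fun p : ℝ × ℝ => Z p.1 p.2))
    (hφ : ContDiff ℝ (⊤:ℕ∞) (fun p : ℝ × ℝ => φ p.1 p.2))
    (hvr : ContDiff ℝ (⊤:ℕ∞) (fun p : ℝ × ℝ => vr p.1 p.2))
    (hvi : ContDiff ℝ (⊤:ℕ∞) (fun p : ℝ × ℝ => vi p.1 p.2))
    (hunit : ∀ s t, ‖dS Z s t‖ = 1)
    (htan : ∀ s t, dS Z s t = Complex.exp (Complex.I * φ s t))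
    (hk : ∀ s t, k s t = dSr φ s t)
    (hknz : ∀ s t, k s t ≠ 0)
    (hdef : ∀ s t, dT Z s t
      = (Complex.ofReal (vr s t) + Complex.I * Complex.ofReal (vi s t)) * dS Z s t) :
    ∀ s t, dTr k s t
      = dSr (fun σ τ =>
          dSr (fun a b => (1 / k a b) * dSr vr a b) σ τ + k σ τ * vr σ τ) s t := by
  -- slice derivative facts
  have hφ1 : ∀ σ τ, HasDerivAt (fun a => φ a τ) (dSr φ σ τ) σ := by
    intro σ τ
    have h := (hasDerivAt_slice1 (fun p : ℝ × ℝ => φ p.1 p.2) hφ σ τ).differentiableAt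
    exact h.hasDerivAt
  have hφ2 : ∀ σ τ, HasDerivAt (fun b => φ σ b) (dTr φ σ τ) τ := by
    intro σ τ
    exact (hasDerivAt_slice2 (fun p : ℝ × ℝ => φ p.1 p.2) hφ σ τ).differentiableAt.hasDerivAt
  have hvr1 : ∀ σ τ, HasDerivAt (fun a => vr a τ) (dSr vr σ τ) σ := by
    intro σ τ
    exact (hasDerivAt_slice1 (fun p : ℝ × ℝ => vr p.1 p.2) hvr σ τ).differentiableAt.hasDerivAt
  have hvi1 : ∀ σ τ, HasDerivAt (fun a => vi a τ) (dSr vi σ τ) σ := by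
    intro σ τ
    exact (hasDerivAt_slice1 (fun p : ℝ × ℝ => vi p.1 p.2) hvi σ τ).differentiableAt.hasDerivAt
  -- the fundamental pointwise complex identity
  have key : ∀ σ τ,
      Complex.I * (dTr φ σ τ : ℂ)
        = ((dSr vr σ τ : ℂ) + Complex.I * (dSr vi σ τ : ℂ))
          + ((vr σ τ : ℂ) + Complex.I * (vi σ τ : ℂ)) * (Complex.I * (dSr φ σ τ : ℂ)) := by
    intro σ τ
    set e : ℂ := Complex.exp (Complex.I * (φ σ τ : ℂ)) with he
    have hene : e ≠ 0 := Complex.exp_ne_zero _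
    -- LHS derivative: t-derivative of exp(I φ σ ·)
    have hL : HasDerivAt (fun b => Complex.exp (Complex.I * (φ σ b : ℂ)))
        (e * (Complex.I * (dTr φ σ τ : ℂ))) τ := by
      have h1 := ((hφ2 σ τ).ofReal_comp).const_mul Complex.I
      simpa [he, mul_comm] using h1.cexp
    -- RHS derivative: s-derivative of (vr + I vi) exp(I φ)
    have hv : HasDerivAt (fun a => ((vr a τ : ℂ) + Complex.I * (vi a τ : ℂ)))
        ((dSr vr σ τ : ℂ) + Complex.I * (dSr vi σ τ : ℂ)) σ :=
      ((hvr1 σ τ).ofReal_comp).add (((hvi1 σ τ).ofReal_comp).const_mul Complex.I)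
    have hee : HasDerivAt (fun a => Complex.exp (Complex.I * (φ a τ : ℂ)))
        (e * (Complex.I * (dSr φ σ τ : ℂ))) σ := by
      have h1 := ((hφ1 σ τ).ofReal_comp).const_mul Complex.I
      simpa [he, mul_comm] using h1.cexp
    have hR : HasDerivAt
        (fun a => ((vr a τ : ℂ) + Complex.I * (vi a τ : ℂ)) * Complex.exp (Complex.I * (φ a τ : ℂ)))
        (((dSr vr σ τ : ℂ) + Complex.I * (dSr vi σ τ : ℂ)) * e
          + ((vr σ τ : ℂ) + Complex.I * (vi σ τ : ℂ)) * (e * (Complex.I * (dSr φ σ τ : ℂ)))) σ :=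
      hv.mul hee
    -- mixed partials commute
    have hmix := mixed_symm (fun p : ℝ × ℝ => Z p.1 p.2) hZ σ τ
    have lfun : (fun b => Complex.exp (Complex.I * (φ σ b : ℂ)))
        = (fun b => deriv (fun a => Z a b) σ) := by
      funext b; exact (htan σ b).symm
    have rfun : (fun a => ((vr a τ : ℂ) + Complex.I * (vi a τ : ℂ))
          * Complex.exp (Complex.I * (φ a τ : ℂ)))
        = (fun a => deriv (fun b => Z a b) τ) := by
      funext a
      have := hdef a τ
      rw [htan a τ] at this
      exact this.symm
    have hEq : e * (Complex.I * (dTr φ σ τ : ℂ))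
        = ((dSr vr σ τ : ℂ) + Complex.I * (dSr vi σ τ : ℂ)) * e
          + ((vr σ τ : ℂ) + Complex.I * (vi σ τ : ℂ)) * (e * (Complex.I * (dSr φ σ τ : ℂ))) := by
      rw [← hL.deriv, ← hR.deriv, lfun, rfun]
      exact hmix
    field_simp at hEq
    -- rearrange: cancel e
    have : (Complex.I * (dTr φ σ τ : ℂ)) * e
        = (((dSr vr σ τ : ℂ) + Complex.I * (dSr vi σ τ : ℂ))
          + ((vr σ τ : ℂ) + Complex.I * (vi σ τ : ℂ)) * (Complex.I * (dSr φ σ τ : ℂ))) * e := by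
      ring_nf
      ring_nf at hEq
      linear_combination e * hEq
    exact mul_right_cancel₀ hene this
  -- real and imaginary parts
  have hre : ∀ σ τ, dSr vr σ τ = vi σ τ * dSr φ σ τ := by
    intro σ τ
    have h := congrArg Complex.re (key σ τ)
    simp [Complex.add_re, Complex.mul_re, Complex.add_im, Complex.mul_im] at h
    linarith
  have him : ∀ σ τ, dTr φ σ τ = dSr vi σ τ + vr σ τ * dSr φ σ τ := by
    intro σ τ
    have h := congrArg Complex.im (key σ τ)
    simp [Complex.add_re, Complex.mul_re, Complex.add_im, Complex.mul_im] at h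
    linarith
  -- conclude
  intro s t
  have step1 : dTr k s t = deriv (fun b => deriv (fun a => φ a b) s) t := by
    unfold dTr
    congr 1
    funext b
    exact hk s b
  have step2 : deriv (fun b => deriv (fun a => φ a b) s) t
      = deriv (fun a => deriv (fun b => φ a b) t) s :=
    mixed_symm (fun p : ℝ × ℝ => φ p.1 p.2) hφ s t
  have step3 : deriv (fun a => deriv (fun b => φ a b) t) s
      = dSr (fun σ τ =>
          dSr (fun a b => (1 / k a b) * dSr vr a b) σ τ + k σ τ * vr σ τ) s t := by
    show _ = deriv (fun σ =>
        dSr (fun a b => (1 / k a b) * dSr vr a b) σ t + k σ t * vr σ t) s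
    congr 1
    funext a
    have h1 : deriv (fun b => φ a b) t = dTr φ a t := rfl
    rw [h1, him a t]
    have h2 : (fun x => (1 / k x t) * dSr vr x t) = (fun x => vi x t) := by
      funext x
      rw [hre x t, ← hk x t]
      field_simp [hknz x t]
    have h3 : dSr (fun a b => (1 / k a b) * dSr vr a b) a t = dSr vi a t := by
      show deriv (fun x => (1 / k x t) * dSr vr x t) a = _
      rw [h2]; rfl
    rw [h3, hk a t]; ring
  rw [step1, step2, step3]
end

section
/- Let Z : ℝ × ℝ → ℂ be smooth with |∂_s Z| ≡ 1, tangent angle φ (∂_s Z = e^{iφ}, φ smooth real) and curvature k = ∂_s φ. Suppose the deformation velocity is v = (1/2)k² + i·∂_s k, i.e. ∂_t Z = ((1/2)k² + i ∂_s k)·∂_s Z. Then the isometric condition k·(∂_s k) = ∂_s((1/2)k²) holds, and the curvature satisfies the modified KdV equation ∂_t k = ∂_s³ k + (3/2) k² ∂_s k; equivalently ∂_t k = Ω_II(∂_s k), the first nonstationary flow of the mKdV hierarchy applied to the stationary flow ∂_{t₁} k = ∂_s k. -/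
open Real

section helpers
variable {E : Type*} [NormedAddCommGroup E] [NormedSpace ℝ E]

noncomputable def pd1 (f : ℝ × ℝ → E) (p : ℝ × ℝ) : E := fderiv ℝ f p (1, 0)
noncomputable def pd2 (f : ℝ × ℝ → E) (p : ℝ × ℝ) : E := fderiv ℝ f p (0, 1)

lemma hasDerivAt_slice1_s10 {f : ℝ × ℝ → E} {s t : ℝ} (hf : DifferentiableAt ℝ f (s, t)) :
    HasDerivAt (fun σ => f (σ, t)) (pd1 f (s, t)) s := by
  have h1 : HasDerivAt (fun σ : ℝ => (σ, t)) (((1:ℝ), (0:ℝ))) s :=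
    (hasDerivAt_id s).prodMk (hasDerivAt_const s t)
  simpa [pd1, Function.comp_def] using hf.hasFDerivAt.comp_hasDerivAt s h1

lemma hasDerivAt_slice2_s10 {f : ℝ × ℝ → E} {s t : ℝ} (hf : DifferentiableAt ℝ f (s, t)) :
    HasDerivAt (fun τ => f (s, τ)) (pd2 f (s, t)) t := by
  have h1 : HasDerivAt (fun τ : ℝ => (s, τ)) (((0:ℝ), (1:ℝ))) t :=
    (hasDerivAt_const t s).prodMk (hasDerivAt_id t)
  simpa [pd2, Function.comp_def] using hf.hasFDerivAt.comp_hasDerivAt t h1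

lemma contDiff_pd1 {f : ℝ × ℝ → E} (hf : ContDiff ℝ (⊤:ℕ∞) f) : ContDiff ℝ (⊤:ℕ∞) (pd1 f) :=
  (hf.fderiv_right (by exact_mod_cast le_top)).clm_apply contDiff_const

lemma contDiff_pd2 {f : ℝ × ℝ → E} (hf : ContDiff ℝ (⊤:ℕ∞) f) : ContDiff ℝ (⊤:ℕ∞) (pd2 f) :=
  (hf.fderiv_right (by exact_mod_cast le_top)).clm_apply contDiff_const

lemma pd_comm {f : ℝ × ℝ → E} (hf : ContDiff ℝ (⊤:ℕ∞) f) (p : ℝ × ℝ) :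
    pd1 (pd2 f) p = pd2 (pd1 f) p := by
  have hd : DifferentiableAt ℝ (fderiv ℝ f) p :=
    ((hf.fderiv_right (m := (⊤:ℕ∞)) (by exact_mod_cast le_top)).differentiable
      (by simp)).differentiableAt
  have h1 : fderiv ℝ (fun x => fderiv ℝ f x (0,1)) p =
      (fderiv ℝ (fderiv ℝ f) p).flip (0,1) := by
    rw [fderiv_clm_apply hd (differentiableAt_const _)]
    simp
  have h2 : fderiv ℝ (fun x => fderiv ℝ f x (1,0)) p =
      (fderiv ℝ (fderiv ℝ f) p).flip (1,0) := by
    rw [fderiv_clm_apply hd (differentiableAt_const _)]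
    simp
  have hsym : fderiv ℝ (fderiv ℝ f) p (1,0) (0,1) = fderiv ℝ (fderiv ℝ f) p (0,1) (1,0) :=
    (hf.contDiffAt.isSymmSndFDerivAt (by rw [minSmoothness_of_isRCLikeNormedField]; exact WithTop.coe_le_coe.mpr le_top)) _ _
  unfold pd1 pd2
  rw [h1, h2]
  simpa using hsym

lemma diffAt_of_smooth {f : ℝ × ℝ → E} (hf : ContDiff ℝ (⊤:ℕ∞) f) (p : ℝ × ℝ) :
    DifferentiableAt ℝ f p :=
  (hf.differentiable (by simp)).differentiableAt

end helpers

/-- For an isometric deformation `Z(s,t)` (`|∂ₛZ| ≡ 1`)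
with tangent angle `φ`, curvature `k = ∂ₛφ`, and deformation velocity
`v = (1/2)k² + i ∂ₛk`, i.e. `∂ₜZ = ((1/2)k² + i ∂ₛk) ∂ₛZ`, the isometric
condition `k ∂ₛk = ∂ₛ((1/2)k²)` holds and the curvature satisfies the
modified KdV equation `∂ₜk = ∂ₛ³k + (3/2) k² ∂ₛk` (equivalently
`∂ₜk = Ω_II(∂ₛk)`, the first nonstationary mKdV flow). -/
theorem mkdv_flow_from_curvature_velocity
    (Z : ℝ → ℝ → ℂ) (φ k : ℝ → ℝ → ℝ)
    (hZ : ContDiff ℝ (⊤:ℕ∞) (fun p : ℝ × ℝ => Z p.1 p.2))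
    (hφ : ContDiff ℝ (⊤:ℕ∞) (fun p : ℝ × ℝ => φ p.1 p.2))
    (hunit : ∀ s t, ‖dS Z s t‖ = 1)
    (htan : ∀ s t, dS Z s t = Complex.exp (Complex.I * φ s t))
    (hk : ∀ s t, k s t = dSr φ s t)
    (hdef : ∀ s t, dT Z s t
      = (Complex.ofReal ((1/2) * (k s t) ^ 2)
          + Complex.I * Complex.ofReal (dSr k s t)) * dS Z s t) :
    (∀ s t, k s t * dSr k s t = dSr (fun σ τ => (1/2) * (k σ τ) ^ 2) s t) ∧
    (∀ s t, dTr k s t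
      = dSr (fun σ τ => dSr (fun a b => dSr k a b) σ τ) s t
        + (3/2) * (k s t) ^ 2 * dSr k s t) := by
  set Φ : ℝ × ℝ → ℝ := fun p => φ p.1 p.2 with hΦdef
  set W : ℝ × ℝ → ℂ := fun p => Z p.1 p.2 with hWdef
  set K : ℝ × ℝ → ℝ := pd1 Φ with hKdef
  have hKs : ContDiff ℝ (⊤:ℕ∞) K := contDiff_pd1 hφ
  set K1 : ℝ × ℝ → ℝ := pd1 K with hK1def
  have hK1s : ContDiff ℝ (⊤:ℕ∞) K1 := contDiff_pd1 hKs
  set K2 : ℝ × ℝ → ℝ := pd1 K1 with hK2def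
  have hK2s : ContDiff ℝ (⊤:ℕ∞) K2 := contDiff_pd1 hK1s
  set K3 : ℝ × ℝ → ℝ := pd1 K2 with hK3def
  -- identify k and its s-derivatives
  have hkK : ∀ s t, k s t = K (s, t) := by
    intro s t
    rw [hk s t]
    exact (hasDerivAt_slice1_s10 (diffAt_of_smooth hφ (s,t))).deriv
  have hkK1 : ∀ s t, dSr k s t = K1 (s, t) := by
    intro s t
    have : (fun σ => k σ t) = fun σ => K (σ, t) := funext fun σ => hkK σ t
    rw [dSr, this]
    exact (hasDerivAt_slice1_s10 (diffAt_of_smooth hKs (s,t))).deriv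
  have hkK2 : ∀ s t, dSr (fun a b => dSr k a b) s t = K2 (s, t) := by
    intro s t
    have : (fun σ => dSr k σ t) = fun σ => K1 (σ, t) := funext fun σ => hkK1 σ t
    rw [dSr, this]
    exact (hasDerivAt_slice1_s10 (diffAt_of_smooth hK1s (s,t))).deriv
  -- goal 1
  have goal1 : ∀ s t, k s t * dSr k s t = dSr (fun σ τ => (1/2) * (k σ τ) ^ 2) s t := by
    intro s t
    have hK' : HasDerivAt (fun σ => K (σ, t)) (K1 (s, t)) s :=
      hasDerivAt_slice1_s10 (diffAt_of_smooth hKs (s,t))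
    have h : HasDerivAt (fun σ => (1/2 : ℝ) * (k σ t) ^ 2)
        ((1/2 : ℝ) * (2 * K (s,t) ^ 1 * K1 (s,t))) s := by
      have : (fun σ => (1/2 : ℝ) * (k σ t) ^ 2) = fun σ => (1/2 : ℝ) * (K (σ, t)) ^ 2 := by
        funext σ; rw [hkK σ t]
      rw [this]
      exact (hK'.pow 2).const_mul _
    have h2 : dSr (fun σ τ => (1/2) * (k σ τ) ^ 2) s t
        = (1/2 : ℝ) * (2 * K (s,t) ^ 1 * K1 (s,t)) := h.deriv
    rw [h2, hkK s t, hkK1 s t]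
    ring
  refine ⟨goal1, ?_⟩
  -- complex geometry
  set EΦ : ℝ × ℝ → ℂ := fun p => Complex.exp (Complex.I * (Φ p : ℂ)) with hEdef
  have hΦc : ContDiff ℝ (⊤:ℕ∞) (fun p : ℝ × ℝ => (Φ p : ℂ)) :=
    Complex.ofRealCLM.contDiff.comp hφ
  have hEs : ContDiff ℝ (⊤:ℕ∞) EΦ := (contDiff_const.mul hΦc).cexp
  have hdSW : ∀ s t, pd1 W (s, t) = EΦ (s, t) := by
    intro s t
    have h1 : dS Z s t = pd1 W (s, t) :=
      (hasDerivAt_slice1_s10 (diffAt_of_smooth hZ (s,t))).deriv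
    rw [← h1, htan s t]
  have hdTW : ∀ s t, pd2 W (s, t)
      = ((((1/2) * (K (s,t)) ^ 2 : ℝ) : ℂ) + Complex.I * ((K1 (s,t) : ℝ) : ℂ)) * EΦ (s, t) := by
    intro s t
    have h1 : dT Z s t = pd2 W (s, t) :=
      (hasDerivAt_slice2_s10 (diffAt_of_smooth hZ (s,t))).deriv
    have := hdef s t
    rw [h1, htan s t, hkK s t, hkK1 s t] at this
    exact this
  -- slice derivative facts
  have hKslice : ∀ s t : ℝ, HasDerivAt (fun σ => K (σ, t)) (K1 (s, t)) s :=
    fun s t => hasDerivAt_slice1_s10 (diffAt_of_smooth hKs (s,t))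
  have hK1slice : ∀ s t : ℝ, HasDerivAt (fun σ => K1 (σ, t)) (K2 (s, t)) s :=
    fun s t => hasDerivAt_slice1_s10 (diffAt_of_smooth hK1s (s,t))
  have hΦslice1 : ∀ s t : ℝ, HasDerivAt (fun σ => Φ (σ, t)) (K (s, t)) s :=
    fun s t => hasDerivAt_slice1_s10 (diffAt_of_smooth hφ (s,t))
  have hΦslice2 : ∀ s t : ℝ, HasDerivAt (fun τ => Φ (s, τ)) (pd2 Φ (s, t)) t :=
    fun s t => hasDerivAt_slice2_s10 (diffAt_of_smooth hφ (s,t))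
  have hEslice1 : ∀ s t : ℝ, HasDerivAt (fun σ => EΦ (σ, t))
      (Complex.I * (K (s,t) : ℂ) * EΦ (s, t)) s := by
    intro s t
    have h0 : HasDerivAt (fun σ => Complex.I * ((Φ (σ, t) : ℝ) : ℂ))
        (Complex.I * (K (s,t) : ℂ)) s := ((hΦslice1 s t).ofReal_comp).const_mul _
    simpa [hEdef, mul_comm] using h0.cexp
  -- key identity: ∂ₜ φ = K2 + (1/2) K³
  have hΦt : ∀ s t : ℝ, pd2 Φ (s, t) = K2 (s, t) + (1/2) * (K (s,t)) ^ 3 := by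
    intro s t
    -- RHS of mixed partials : ∂ₜ (∂ₛ W)
    have hA : pd2 (pd1 W) (s, t) = Complex.I * Complex.ofReal (pd2 Φ (s,t)) * EΦ (s, t) := by
      have hfun : pd1 W = EΦ := funext fun p => hdSW p.1 p.2
      have h0 : HasDerivAt (fun τ => Complex.I * ((Φ (s, τ) : ℝ) : ℂ))
          (Complex.I * Complex.ofReal (pd2 Φ (s,t))) t := ((hΦslice2 s t).ofReal_comp).const_mul _
      have h1 : HasDerivAt (fun τ => EΦ (s, τ))
          (Complex.I * Complex.ofReal (pd2 Φ (s,t)) * EΦ (s, t)) t := by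
        simpa [hEdef, mul_comm] using h0.cexp
      have h2 : HasDerivAt (fun τ => EΦ (s, τ)) (pd2 EΦ (s, t)) t :=
        hasDerivAt_slice2_s10 (diffAt_of_smooth hEs (s,t))
      rw [hfun]
      exact (h2.unique h1)
    -- LHS : ∂ₛ (∂ₜ W)
    have hB : pd1 (pd2 W) (s, t)
        = (((K (s,t) * K1 (s,t) : ℝ) : ℂ) + Complex.I * ((K2 (s,t) : ℝ) : ℂ)
            + ((((1/2) * (K (s,t)) ^ 2 : ℝ) : ℂ) + Complex.I * ((K1 (s,t) : ℝ) : ℂ))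
              * (Complex.I * (K (s,t) : ℂ))) * EΦ (s, t) := by
      have hfun : pd2 W = fun p =>
          ((((1/2) * (K p) ^ 2 : ℝ) : ℂ) + Complex.I * ((K1 p : ℝ) : ℂ)) * EΦ p :=
        funext fun p => hdTW p.1 p.2
      have hV : HasDerivAt
          (fun σ => ((((1/2) * (K (σ,t)) ^ 2 : ℝ) : ℂ) + Complex.I * ((K1 (σ,t) : ℝ) : ℂ)))
          (((K (s,t) * K1 (s,t) : ℝ) : ℂ) + Complex.I * ((K2 (s,t) : ℝ) : ℂ)) s := by
        have ha : HasDerivAt (fun σ => ((1/2 : ℝ) * (K (σ,t)) ^ 2))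
            (K (s,t) * K1 (s,t)) s := by
          have := ((hKslice s t).pow 2).const_mul (1/2 : ℝ)
          exact this.congr_deriv (by ring)
        have hb : HasDerivAt (fun σ => Complex.I * ((K1 (σ,t) : ℝ) : ℂ))
            (Complex.I * ((K2 (s,t) : ℝ) : ℂ)) s := ((hK1slice s t).ofReal_comp).const_mul _
        exact (ha.ofReal_comp).add hb
      have hprod := hV.mul (hEslice1 s t)
      have h2 : HasDerivAt (fun σ => pd2 W (σ, t)) (pd1 (pd2 W) (s, t)) s :=
        hasDerivAt_slice1_s10 (diffAt_of_smooth (contDiff_pd2 hZ) (s,t))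
      rw [hfun] at h2
      have h3 := h2.unique hprod
      rw [hfun, h3]
      ring
    have heq := hB.symm.trans ((pd_comm hZ (s,t)).trans hA)
    have hEne : EΦ (s,t) ≠ 0 := Complex.exp_ne_zero _
    have heq2 := mul_right_cancel₀ hEne heq
    have him := congrArg Complex.im heq2
    simp only [Complex.add_im, Complex.mul_im, Complex.ofReal_re, Complex.ofReal_im,
      Complex.I_re, Complex.I_im, Complex.add_re, Complex.mul_re] at him
    linear_combination -him
  -- final computation
  intro s t
  have hdTrk : dTr k s t = pd2 K (s, t) := by
    have : (fun τ => k s τ) = fun τ => K (s, τ) := funext fun τ => hkK s τ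
    rw [dTr, this]
    exact (hasDerivAt_slice2_s10 (diffAt_of_smooth hKs (s,t))).deriv
  have hcomm : pd2 K (s, t) = pd1 (pd2 Φ) (s, t) := (pd_comm hφ (s,t)).symm
  have hfun : pd2 Φ = fun p => K2 p + (1/2) * (K p) ^ 3 := funext fun p => hΦt p.1 p.2
  have hK2slice : HasDerivAt (fun σ => K2 (σ, t)) (K3 (s, t)) s :=
    hasDerivAt_slice1_s10 (diffAt_of_smooth hK2s (s,t))
  have hRHS : HasDerivAt (fun σ => K2 (σ, t) + (1/2) * (K (σ,t)) ^ 3)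
      (K3 (s, t) + (3/2) * (K (s,t)) ^ 2 * K1 (s,t)) s := by
    have hb : HasDerivAt (fun σ => (1/2 : ℝ) * (K (σ,t)) ^ 3)
        ((3/2) * (K (s,t)) ^ 2 * K1 (s,t)) s := by
      have := ((hKslice s t).pow 3).const_mul (1/2 : ℝ)
      exact this.congr_deriv (by ring)
    exact hK2slice.add hb
  have hslice : HasDerivAt (fun σ => pd2 Φ (σ, t)) (pd1 (pd2 Φ) (s, t)) s :=
    hasDerivAt_slice1_s10 (diffAt_of_smooth (contDiff_pd2 hφ) (s,t))
  rw [hfun] at hslice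
  have hval : pd1 (fun p => K2 p + (1/2) * (K p) ^ 3) (s, t)
      = K3 (s, t) + (3/2) * (K (s,t)) ^ 2 * K1 (s,t) :=
    hslice.unique hRHS
  -- third s-derivative identification
  have hkK3 : dSr (fun σ τ => dSr (fun a b => dSr k a b) σ τ) s t = K3 (s, t) := by
    have : (fun σ => dSr (fun a b => dSr k a b) σ t) = fun σ => K2 (σ, t) :=
      funext fun σ => hkK2 σ t
    rw [dSr, this]
    exact hK2slice.deriv
  rw [hdTrk, hcomm, hfun, hval, hkK3, hkK s t, hkK1 s t]
end

section
/- Let k, uʳ, uⁱ, vʳ, vⁱ : ℝ → ℝ be smooth and 2π-periodic, let ℓ ≥ 1 be a natural number, and define the pairing ⟨u, v⟩_ℓ = (1/2)∫₀^{2π} ( uʳ(s) vⁱ(s) − uⁱ(s) vʳ(s) )·k(s)^ℓ ds for u = uʳ + i uⁱ, v = vʳ + i vⁱ. Then: (1) ⟨u, v⟩_ℓ = −⟨v, u⟩_ℓ (antisymmetry); (2) if u and v both satisfy the isometric condition, k·uⁱ = ∂_s uʳ and k·vⁱ = ∂_s vʳ, then ⟨u, v⟩_ℓ = (1/2)∫₀^{2π}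 k(s)^{ℓ−1} ( uʳ(s) ∂_s vʳ(s) − vʳ(s) ∂_s uʳ(s) ) ds; (3) in particular, for ℓ = 1, ⟨u, v⟩₁ = −∫₀^{2π} vʳ(s) ∂_s uʳ(s) ds. -/
open Real

/-- For smooth `2π`-periodic `k, uʳ, uⁱ, vʳ, vⁱ : ℝ → ℝ`
and `ℓ ≥ 1`, with the pairing
`⟨u,v⟩_ℓ = (1/2)∫₀^{2π} (uʳvⁱ - uⁱvʳ) kˡ ds`:
(1) the pairing is antisymmetric; (2) if `u` and `v` satisfy the isometric
condition (`k uⁱ = ∂ₛuʳ`, `k vⁱ = ∂ₛvʳ`), then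
`⟨u,v⟩_ℓ = (1/2)∫₀^{2π} k^{ℓ-1}(uʳ ∂ₛvʳ - vʳ ∂ₛuʳ) ds`;
(3) in particular, for `ℓ = 1`, `⟨u,v⟩₁ = -∫₀^{2π} vʳ ∂ₛuʳ ds`. -/
theorem symplectic_pairing_properties
    (k ur ui vr vi : ℝ → ℝ)
    (hk : ContDiff ℝ (⊤:ℕ∞) k) (hur : ContDiff ℝ (⊤:ℕ∞) ur)
    (hui : ContDiff ℝ (⊤:ℕ∞) ui) (hvr : ContDiff ℝ (⊤:ℕ∞) vr)
    (hvi : ContDiff ℝ (⊤:ℕ∞) vi)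
    (hkper : Function.Periodic k (2 * π))
    (hurper : Function.Periodic ur (2 * π))
    (huiper : Function.Periodic ui (2 * π))
    (hvrper : Function.Periodic vr (2 * π))
    (hviper : Function.Periodic vi (2 * π))
    (ℓ : ℕ) (hℓ : 1 ≤ ℓ) :
    ((1/2) * (∫ s in (0:ℝ)..(2 * π), (ur s * vi s - ui s * vr s) * (k s) ^ ℓ)
      = -((1/2) * ∫ s in (0:ℝ)..(2 * π), (vr s * ui s - vi s * ur s) * (k s) ^ ℓ)) ∧
    ((∀ s, k s * ui s = deriv ur s) → (∀ s, k s * vi s = deriv vr s) →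
      ((1/2) * (∫ s in (0:ℝ)..(2 * π), (ur s * vi s - ui s * vr s) * (k s) ^ ℓ)
        = (1/2) * ∫ s in (0:ℝ)..(2 * π),
            (k s) ^ (ℓ - 1) * (ur s * deriv vr s - vr s * deriv ur s)) ∧
      (ℓ = 1 →
        (1/2) * (∫ s in (0:ℝ)..(2 * π), (ur s * vi s - ui s * vr s) * (k s) ^ ℓ)
          = -∫ s in (0:ℝ)..(2 * π), vr s * deriv ur s)) := by
  have hurd : Differentiable ℝ ur := hur.differentiable (by simp)
  have hvrd : Differentiable ℝ vr := hvr.differentiable (by simp)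
  have hur' : Continuous (deriv ur) := (hur.iterate_deriv 1).continuous
  have hvr' : Continuous (deriv vr) := (hvr.iterate_deriv 1).continuous
  constructor
  · -- antisymmetry
    have hpt : ∀ s, (ur s * vi s - ui s * vr s) * (k s) ^ ℓ
        = -((vr s * ui s - vi s * ur s) * (k s) ^ ℓ) := by intro s; ring
    rw [intervalIntegral.integral_congr (g := fun s =>
        -((vr s * ui s - vi s * ur s) * (k s) ^ ℓ)) (fun s _ => hpt s),
      intervalIntegral.integral_neg]
    ring
  intro hu hv
  have hpt2 : ∀ s, (ur s * vi s - ui s * vr s) * (k s) ^ ℓ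
      = (k s) ^ (ℓ - 1) * (ur s * deriv vr s - vr s * deriv ur s) := by
    intro s
    have hpow : (k s) ^ ℓ = (k s) ^ (ℓ - 1) * k s := by
      rw [← pow_succ]; congr 1; omega
    rw [← hu s, ← hv s, hpow]; ring
  have heq2 : (∫ s in (0:ℝ)..(2 * π), (ur s * vi s - ui s * vr s) * (k s) ^ ℓ)
      = ∫ s in (0:ℝ)..(2 * π),
          (k s) ^ (ℓ - 1) * (ur s * deriv vr s - vr s * deriv ur s) :=
    intervalIntegral.integral_congr (fun s _ => hpt2 s)
  refine ⟨by rw [heq2], ?_⟩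
  intro hℓ1
  subst hℓ1
  rw [heq2]
  norm_num
  -- FTC: ∫ (ur vr)' = 0 by periodicity
  have hderiv : ∀ s ∈ Set.uIcc (0:ℝ) (2 * π),
      HasDerivAt (fun t => ur t * vr t) (deriv ur s * vr s + ur s * deriv vr s) s :=
    fun s _ => ((hurd s).hasDerivAt.mul (hvrd s).hasDerivAt)
  have hint : IntervalIntegrable (fun s => deriv ur s * vr s + ur s * deriv vr s)
      MeasureTheory.volume 0 (2 * π) :=
    ((hur'.mul hvrd.continuous).add (hurd.continuous.mul hvr')).intervalIntegrable _ _
  have hftc := intervalIntegral.integral_eq_sub_of_hasDerivAt hderiv hint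
  have hper : ur (2 * π) * vr (2 * π) - ur 0 * vr 0 = 0 := by
    have h1 := hurper 0
    have h2 := hvrper 0
    simp only [zero_add] at h1 h2
    rw [h1, h2]; ring
  rw [hper] at hftc
  have hi1 : IntervalIntegrable (fun s => ur s * deriv vr s)
      MeasureTheory.volume 0 (2 * π) :=
    (hurd.continuous.mul hvr').intervalIntegrable _ _
  have hi2 : IntervalIntegrable (fun s => vr s * deriv ur s)
      MeasureTheory.volume 0 (2 * π) :=
    (hvrd.continuous.mul hur').intervalIntegrable _ _
  rw [intervalIntegral.integral_sub hi1 hi2]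
  have hsum : (∫ s in (0:ℝ)..(2 * π), ur s * deriv vr s)
      + ∫ s in (0:ℝ)..(2 * π), vr s * deriv ur s = 0 := by
    rw [← intervalIntegral.integral_add hi1 hi2,
      intervalIntegral.integral_congr (g := fun s =>
        deriv ur s * vr s + ur s * deriv vr s) (fun s _ => by ring)]
    exact hftc
  linarith
end
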